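/- Let A be a bimonoid in a braided monoidal category C, with multiplication m, unit u, comultiplication d and counit e. Set t₁ := (d ⊗ 1_A) ≫ (1_A ⊗ m) and t₂ := (1_A ⊗ d) ≫ (m ⊗ 1_A), both A ⊗ A ⟶ A ⊗ A. Then (t₁, t₂, e) is a multiplier bimonoid in C: t₁ is a counital fusion morphism in C, t₂ satisfies the reversed fusion equation (t₂ ⊗ 1_A) ≫ (1_A ⊗ b_{A,A}) ≫ (t₂ ⊗ 1_A) ≫ (1_A ⊗ b_{A,A}⁻¹) ≫ (1_A ⊗ t₂) = (1_A ⊗ t₂) ≫ (t₂ ⊗ 1_A) and the reversed counitality t₂ ≫ (e ⊗ 1_A) = e ⊗ 1_A, and moreover (t₂ ⊗ 1_A) ≫ (1_A ⊗ t₁) = (1_A ⊗ t₁) ≫ (t₂ ⊗ 1_A) and t₁ ≫ (e ⊗ 1_A) = t₂ ≫ (1_A ⊗ e) (as morphisms A ⊗ A ⟶ A after composing with unitors). -/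

import Mathlib

open CategoryTheory Category MonoidalCategory

universe v u

variable {C : Type u} [Category.{v} C] [MonoidalCategory C] [BraidedCategory C]

/-- The fusion equation for `t : A ⊗ A ⟶ A ⊗ A` in a braided monoidal category,
with all coherence isomorphisms made explicit (domain `A ⊗ (A ⊗ A)`). -/
def FusionEq (A : C) (t : A ⊗ A ⟶ A ⊗ A) : Prop :=
  (A ◁ t) ≫ (α_ A A A).inv ≫ ((β_ A A).hom ▷ A) ≫ (α_ A A A).hom ≫ (A ◁ t) ≫
      (α_ A A A).inv ≫ ((β_ A A).inv ▷ A) ≫ (t ▷ A) ≫ (α_ A A A).hom =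
    (α_ A A A).inv ≫ (t ▷ A) ≫ (α_ A A A).hom ≫ (A ◁ t)

/-- The counitality condition `t ≫ (1 ⊗ e) = 1 ⊗ e`. -/
def Counital (A : C) (t : A ⊗ A ⟶ A ⊗ A) (e : A ⟶ 𝟙_ C) : Prop :=
  t ≫ (A ◁ e) = A ◁ e

/-- The fusion equation in the reverse monoidal category `C^rev`, expressed in `C`
(domain `(A ⊗ A) ⊗ A`). -/
def RevFusionEq (A : C) (t : A ⊗ A ⟶ A ⊗ A) : Prop :=
  (t ▷ A) ≫ (α_ A A A).hom ≫ (A ◁ (β_ A A).hom) ≫ (α_ A A A).inv ≫ (t ▷ A) ≫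
      (α_ A A A).hom ≫ (A ◁ (β_ A A).inv) ≫ (A ◁ t) ≫ (α_ A A A).inv =
    (α_ A A A).hom ≫ (A ◁ t) ≫ (α_ A A A).inv ≫ (t ▷ A)

/-- The reversed counitality condition `t ≫ (e ⊗ 1) = e ⊗ 1`. -/
def RevCounital (A : C) (t : A ⊗ A ⟶ A ⊗ A) (e : A ⟶ 𝟙_ C) : Prop :=
  t ≫ (e ▷ A) = e ▷ A

/-- The compatibility `(t₂ ⊗ 1) ≫ (1 ⊗ t₁) = (1 ⊗ t₁) ≫ (t₂ ⊗ 1)`. -/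
def CompatEq (A : C) (t₁ t₂ : A ⊗ A ⟶ A ⊗ A) : Prop :=
  (t₂ ▷ A) ≫ (α_ A A A).hom ≫ (A ◁ t₁) ≫ (α_ A A A).inv =
    (α_ A A A).hom ≫ (A ◁ t₁) ≫ (α_ A A A).inv ≫ (t₂ ▷ A)

section Aux

open BraidedCategory MonoidalOpposite

set_option maxHeartbeats 2000000 in
private lemma aux_fusion (A : C) (m : A ⊗ A ⟶ A) (d : A ⟶ A ⊗ A)
    (mul_assoc : (m ▷ A) ≫ m = (α_ A A A).hom ≫ (A ◁ m) ≫ m)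
    (comul_assoc : d ≫ (A ◁ d) = d ≫ (d ▷ A) ≫ (α_ A A A).hom)
    (mul_comul : m ≫ d =
      (d ⊗ₘ d) ≫ (α_ A A (A ⊗ A)).hom ≫ (A ◁ (α_ A A A).inv) ≫
        (A ◁ ((β_ A A).hom ▷ A)) ≫ (A ◁ (α_ A A A).hom) ≫
        (α_ A A (A ⊗ A)).inv ≫ (m ⊗ₘ m)) :
    FusionEq A ((d ▷ A) ≫ (α_ A A A).hom ≫ (A ◁ m)) := by
  unfold FusionEq
  have dd : d ≫ (d ▷ A) = (d ≫ (A ◁ d)) ≫ (α_ A A A).inv := by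
    rw [comul_assoc]; simp [Category.assoc]
  calc
    _ = 𝟙 (A ⊗ (A ⊗ A)) ⊗≫ (A ◁ (d ▷ A)) ⊗≫ (A ◁ (A ◁ m))
        ⊗≫ (((β_ A A).hom ≫ (A ◁ d)) ▷ A)
        ⊗≫ (A ◁ (A ◁ m))
        ⊗≫ (((β_ A A).inv ≫ (d ▷ A)) ▷ A)
        ⊗≫ ((A ◁ m) ▷ A) ⊗≫ 𝟙 (A ⊗ (A ⊗ A)) := by monoidal
    _ = 𝟙 (A ⊗ (A ⊗ A)) ⊗≫ (A ◁ (d ▷ A)) ⊗≫ (A ◁ (A ◁ m))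
        ⊗≫ (((d ▷ A) ≫ (β_ (A ⊗ A) A).hom) ▷ A)
        ⊗≫ (A ◁ ((A ◁ m) ≫ (d ▷ A)))
        ⊗≫ ((β_ (A ⊗ A) A).inv ▷ A)
        ⊗≫ ((A ◁ m) ▷ A) ⊗≫ 𝟙 (A ⊗ (A ⊗ A)) := by
      rw [← braiding_naturality_left, ← braiding_inv_naturality_right]; monoidal
    _ = 𝟙 (A ⊗ (A ⊗ A)) ⊗≫ (A ◁ (d ▷ A)) ⊗≫ (A ◁ (A ◁ m))
        ⊗≫ (((d ▷ A) ≫ (β_ (A ⊗ A) A).hom ≫ (A ◁ (d ▷ A))) ▷ A)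
        ⊗≫ ((A ⊗ (A ⊗ A)) ◁ m)
        ⊗≫ ((β_ (A ⊗ A) A).inv ▷ A)
        ⊗≫ ((A ◁ m) ▷ A) ⊗≫ 𝟙 (A ⊗ (A ⊗ A)) := by
      rw [whisker_exchange]; monoidal
    _ = 𝟙 (A ⊗ (A ⊗ A)) ⊗≫ (A ◁ (d ▷ A)) ⊗≫ (A ◁ (A ◁ m))
        ⊗≫ ((((d ≫ (d ▷ A)) ▷ A) ≫ (β_ ((A ⊗ A) ⊗ A) A).hom) ▷ A)
        ⊗≫ ((A ⊗ (A ⊗ A)) ◁ m)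
        ⊗≫ ((β_ (A ⊗ A) A).inv ▷ A)
        ⊗≫ ((A ◁ m) ▷ A) ⊗≫ 𝟙 (A ⊗ (A ⊗ A)) := by
      rw [← braiding_naturality_left]; monoidal
    _ = 𝟙 (A ⊗ (A ⊗ A)) ⊗≫ (A ◁ (d ▷ A)) ⊗≫ (A ◁ (A ◁ m))
        ⊗≫ (((d ≫ (A ◁ d)) ▷ A) ▷ A)
        ⊗≫ ((((A ⊗ A) ◁ (β_ A A).hom) ▷ A))
        ⊗≫ (((β_ (A ⊗ A) A).hom ▷ A) ▷ A)
        ⊗≫ ((A ⊗ (A ⊗ A)) ◁ m)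
        ⊗≫ ((β_ (A ⊗ A) A).inv ▷ A)
        ⊗≫ ((A ◁ m) ▷ A) ⊗≫ 𝟙 (A ⊗ (A ⊗ A)) := by
      rw [dd, braiding_tensor_left_hom (A ⊗ A) A A]; monoidal
    _ = 𝟙 (A ⊗ (A ⊗ A)) ⊗≫ (A ◁ (d ▷ A)) ⊗≫ (A ◁ (A ◁ m))
        ⊗≫ (((d ≫ (A ◁ d)) ▷ A) ▷ A)
        ⊗≫ ((((A ⊗ A) ◁ (β_ A A).hom) ▷ A))
        ⊗≫ (((β_ (A ⊗ A) A).hom ▷ (A ⊗ A)) ≫ ((A ⊗ (A ⊗ A)) ◁ m))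
        ⊗≫ ((β_ (A ⊗ A) A).inv ▷ A)
        ⊗≫ ((A ◁ m) ▷ A) ⊗≫ 𝟙 (A ⊗ (A ⊗ A)) := by monoidal
    _ = 𝟙 (A ⊗ (A ⊗ A)) ⊗≫ (A ◁ (d ▷ A)) ⊗≫ (A ◁ (A ◁ m))
        ⊗≫ (((d ≫ (A ◁ d)) ▷ A) ▷ A)
        ⊗≫ ((((A ⊗ A) ◁ (β_ A A).hom) ▷ A))
        ⊗≫ (((A ⊗ A) ⊗ A) ◁ m)
        ⊗≫ ((((β_ (A ⊗ A) A).hom ≫ (β_ (A ⊗ A) A).inv) ▷ A))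
        ⊗≫ ((A ◁ m) ▷ A) ⊗≫ 𝟙 (A ⊗ (A ⊗ A)) := by
      rw [← whisker_exchange]; monoidal
    _ = 𝟙 (A ⊗ (A ⊗ A)) ⊗≫ (A ◁ (d ▷ A)) ⊗≫ (A ◁ (A ◁ m))
        ⊗≫ (((d ≫ (A ◁ d)) ▷ A) ▷ A)
        ⊗≫ ((((A ⊗ A) ◁ (β_ A A).hom) ▷ A))
        ⊗≫ (((A ⊗ A) ⊗ A) ◁ m)
        ⊗≫ ((A ◁ m) ▷ A) ⊗≫ 𝟙 (A ⊗ (A ⊗ A)) := by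
      rw [Iso.hom_inv_id]; monoidal
    _ = 𝟙 (A ⊗ (A ⊗ A)) ⊗≫ (A ◁ (d ▷ A))
        ⊗≫ ((A ◁ (A ◁ m)) ≫ ((d ≫ (A ◁ d)) ▷ (A ⊗ A)))
        ⊗≫ ((((A ⊗ A) ◁ (β_ A A).hom) ▷ A))
        ⊗≫ (((A ⊗ A) ⊗ A) ◁ m)
        ⊗≫ ((A ◁ m) ▷ A) ⊗≫ 𝟙 (A ⊗ (A ⊗ A)) := by monoidal
    _ = 𝟙 (A ⊗ (A ⊗ A)) ⊗≫ (A ◁ (d ▷ A))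
        ⊗≫ ((d ≫ (A ◁ d)) ▷ (A ⊗ (A ⊗ A)))
        ⊗≫ (((((A ⊗ A) ⊗ (A ⊗ A)) ◁ m) ≫ (((A ⊗ A) ◁ (β_ A A).hom) ▷ A)))
        ⊗≫ (((A ⊗ A) ⊗ A) ◁ m)
        ⊗≫ ((A ◁ m) ▷ A) ⊗≫ 𝟙 (A ⊗ (A ⊗ A)) := by
      rw [whisker_exchange]; monoidal
    _ = 𝟙 (A ⊗ (A ⊗ A)) ⊗≫ (A ◁ (d ▷ A))
        ⊗≫ ((d ≫ (A ◁ d)) ▷ (A ⊗ (A ⊗ A)))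
        ⊗≫ ((((A ⊗ A) ◁ (β_ A A).hom) ▷ (A ⊗ A)))
        ⊗≫ ((((A ⊗ A) ⊗ A) ◁ ((α_ A A A).hom ≫ (A ◁ m) ≫ m)))
        ⊗≫ ((A ◁ m) ▷ A) ⊗≫ 𝟙 (A ⊗ (A ⊗ A)) := by
      rw [whisker_exchange]; monoidal
    _ = 𝟙 (A ⊗ (A ⊗ A)) ⊗≫ (A ◁ (d ▷ A))
        ⊗≫ ((d ≫ (A ◁ d)) ▷ (A ⊗ (A ⊗ A)))
        ⊗≫ ((((A ⊗ A) ◁ (β_ A A).hom) ▷ (A ⊗ A)))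
        ⊗≫ (((A ⊗ (A ⊗ A)) ◁ ((m ▷ A) ≫ m)) ≫ ((A ◁ m) ▷ A))
        ⊗≫ 𝟙 (A ⊗ (A ⊗ A)) := by
      rw [← mul_assoc]; monoidal
    _ = 𝟙 (A ⊗ (A ⊗ A)) ⊗≫ ((A ◁ (d ▷ A)) ≫ ((d ≫ (A ◁ d)) ▷ ((A ⊗ A) ⊗ A)))
        ⊗≫ ((((A ⊗ A) ◁ (β_ A A).hom) ▷ (A ⊗ A)))
        ⊗≫ (((A ◁ m) ▷ ((A ⊗ A) ⊗ A)))
        ⊗≫ (((A ⊗ A) ◁ ((m ▷ A) ≫ m)))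
        ⊗≫ 𝟙 (A ⊗ (A ⊗ A)) := by
      rw [whisker_exchange]; monoidal
    _ = 𝟙 (A ⊗ (A ⊗ A)) ⊗≫ ((d ≫ (A ◁ d)) ▷ (A ⊗ A))
        ⊗≫ ((A ⊗ (A ⊗ A)) ◁ (d ▷ A))
        ⊗≫ ((((A ⊗ A) ◁ (β_ A A).hom) ▷ (A ⊗ A)))
        ⊗≫ (((A ◁ m) ▷ ((A ⊗ A) ⊗ A)))
        ⊗≫ (((A ⊗ A) ◁ ((m ▷ A) ≫ m)))
        ⊗≫ 𝟙 (A ⊗ (A ⊗ A)) := by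
      rw [whisker_exchange]; monoidal
    _ = 𝟙 (A ⊗ (A ⊗ A)) ⊗≫ ((d ▷ A) ▷ A)
        ⊗≫ (A ◁ ((d ▷ A) ▷ A))
        ⊗≫ (A ◁ (((A ⊗ A) ◁ d) ▷ A))
        ⊗≫ (A ◁ ((A ◁ ((β_ A A).hom ▷ A)) ▷ A))
        ⊗≫ (A ◁ ((m ▷ (A ⊗ A)) ▷ A))
        ⊗≫ (A ◁ ((A ◁ m) ▷ A))
        ⊗≫ (A ◁ (A ◁ m)) ⊗≫ 𝟙 (A ⊗ (A ⊗ A)) := by monoidal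
    _ = 𝟙 (A ⊗ (A ⊗ A)) ⊗≫ ((d ▷ A) ▷ A) ⊗≫ (A ◁ ((m ≫ d) ▷ A)) ⊗≫ (A ◁ (A ◁ m))
        ⊗≫ 𝟙 (A ⊗ (A ⊗ A)) := by
      rw [mul_comul, tensorHom_def d d, tensorHom_def m m]; monoidal
    _ = _ := by monoidal

private lemma aux_counital (A : C) (m : A ⊗ A ⟶ A) (d : A ⟶ A ⊗ A) (e : A ⟶ 𝟙_ C)
    (comul_counit : d ≫ (A ◁ e) = (ρ_ A).inv)
    (mul_counit : m ≫ e = (e ⊗ₘ e) ≫ (λ_ (𝟙_ C)).hom) :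
    Counital A ((d ▷ A) ≫ (α_ A A A).hom ≫ (A ◁ m)) e := by
  unfold Counital
  simp only [assoc, ← MonoidalCategory.whiskerLeft_comp, mul_counit]
  simp only [MonoidalCategory.tensorHom_def, MonoidalCategory.whiskerLeft_comp, assoc]
  slice_lhs 2 3 => rw [← associator_naturality_middle]
  slice_lhs 1 2 => rw [← comp_whiskerRight, comul_counit]
  rw [id_whiskerLeft]
  simp only [MonoidalCategory.whiskerLeft_comp, assoc]
  monoidal

set_option maxHeartbeats 2000000 in
private lemma aux_compat (A : C) (m : A ⊗ A ⟶ A) (d : A ⟶ A ⊗ A)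
    (comul_assoc : d ≫ (A ◁ d) = d ≫ (d ▷ A) ≫ (α_ A A A).hom) :
    CompatEq A ((d ▷ A) ≫ (α_ A A A).hom ≫ (A ◁ m))
      ((A ◁ d) ≫ (α_ A A A).inv ≫ (m ▷ A)) := by
  unfold CompatEq
  calc
    _ = 𝟙 ((A ⊗ A) ⊗ A) ⊗≫ ((A ◁ d) ▷ A) ⊗≫ (((m ▷ A) ≫ (A ◁ d)) ▷ A)
        ⊗≫ (A ◁ (A ◁ m)) ⊗≫ 𝟙 ((A ⊗ A) ⊗ A) := by monoidal
    _ = 𝟙 ((A ⊗ A) ⊗ A) ⊗≫ ((A ◁ d) ▷ A) ⊗≫ ((((A ⊗ A) ◁ d) ≫ (m ▷ (A ⊗ A))) ▷ A)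
        ⊗≫ (A ◁ (A ◁ m)) ⊗≫ 𝟙 ((A ⊗ A) ⊗ A) := by
      rw [← whisker_exchange]
    _ = 𝟙 ((A ⊗ A) ⊗ A) ⊗≫ ((A ◁ (d ≫ (A ◁ d))) ▷ A) ⊗≫ ((m ▷ (A ⊗ A)) ▷ A)
        ⊗≫ (A ◁ (A ◁ m)) ⊗≫ 𝟙 ((A ⊗ A) ⊗ A) := by monoidal
    _ = 𝟙 ((A ⊗ A) ⊗ A) ⊗≫ ((A ◁ (d ≫ (d ▷ A) ≫ (α_ A A A).hom)) ▷ A) ⊗≫ ((m ▷ (A ⊗ A)) ▷ A)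
        ⊗≫ (A ◁ (A ◁ m)) ⊗≫ 𝟙 ((A ⊗ A) ⊗ A) := by rw [comul_assoc]
    _ = 𝟙 ((A ⊗ A) ⊗ A) ⊗≫ ((A ◁ (d ≫ (d ▷ A))) ▷ A)
        ⊗≫ ((m ▷ (A ⊗ (A ⊗ A))) ≫ (A ◁ (A ◁ m))) ⊗≫ 𝟙 ((A ⊗ A) ⊗ A) := by monoidal
    _ = 𝟙 ((A ⊗ A) ⊗ A) ⊗≫ ((A ◁ (d ≫ (d ▷ A))) ▷ A)
        ⊗≫ (((A ⊗ A) ◁ (A ◁ m)) ≫ (m ▷ (A ⊗ A))) ⊗≫ 𝟙 ((A ⊗ A) ⊗ A) := by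
      rw [← whisker_exchange]
    _ = 𝟙 ((A ⊗ A) ⊗ A) ⊗≫ (A ◁ (d ▷ A)) ⊗≫ (A ◁ ((d ▷ (A ⊗ A)) ≫ ((A ⊗ A) ◁ m)))
        ⊗≫ (m ▷ (A ⊗ A)) ⊗≫ 𝟙 ((A ⊗ A) ⊗ A) := by monoidal
    _ = 𝟙 ((A ⊗ A) ⊗ A) ⊗≫ (A ◁ (d ▷ A)) ⊗≫ (A ◁ ((A ◁ m) ≫ (d ▷ A)))
        ⊗≫ (m ▷ (A ⊗ A)) ⊗≫ 𝟙 ((A ⊗ A) ⊗ A) := by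
      rw [← whisker_exchange]
    _ = _ := by monoidal

private lemma aux_last (A : C) (m : A ⊗ A ⟶ A) (d : A ⟶ A ⊗ A) (e : A ⟶ 𝟙_ C)
    (counit_comul : d ≫ (e ▷ A) = (λ_ A).inv)
    (comul_counit : d ≫ (A ◁ e) = (ρ_ A).inv) :
    ((d ▷ A) ≫ (α_ A A A).hom ≫ (A ◁ m)) ≫ (e ▷ A) ≫ (λ_ A).hom =
      ((A ◁ d) ≫ (α_ A A A).inv ≫ (m ▷ A)) ≫ (A ◁ e) ≫ (ρ_ A).hom := by
  have h1 : ((d ▷ A) ≫ (α_ A A A).hom ≫ (A ◁ m)) ≫ (e ▷ A) ≫ (λ_ A).hom = m := by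
    calc
      _ = 𝟙 (A ⊗ A) ⊗≫ (d ▷ A) ⊗≫ ((A ◁ m) ≫ (e ▷ A)) ⊗≫ 𝟙 A := by monoidal
      _ = 𝟙 (A ⊗ A) ⊗≫ ((d ≫ (e ▷ A)) ▷ A) ⊗≫ (𝟙_ C ◁ m) ⊗≫ 𝟙 A := by
        rw [whisker_exchange]; monoidal
      _ = 𝟙 (A ⊗ A) ⊗≫ ((λ_ A).inv ▷ A) ⊗≫ (𝟙_ C ◁ m) ⊗≫ 𝟙 A := by rw [counit_comul]
      _ = m := by monoidal
  have h2 : ((A ◁ d) ≫ (α_ A A A).inv ≫ (m ▷ A)) ≫ (A ◁ e) ≫ (ρ_ A).hom = m := by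
    calc
      _ = 𝟙 (A ⊗ A) ⊗≫ (A ◁ d) ⊗≫ ((m ▷ A) ≫ (A ◁ e)) ⊗≫ 𝟙 A := by monoidal
      _ = 𝟙 (A ⊗ A) ⊗≫ ((A ◁ (d ≫ (A ◁ e)))) ⊗≫ (m ▷ 𝟙_ C) ⊗≫ 𝟙 A := by
        rw [← whisker_exchange]; monoidal
      _ = 𝟙 (A ⊗ A) ⊗≫ (A ◁ (ρ_ A).inv) ⊗≫ (m ▷ 𝟙_ C) ⊗≫ 𝟙 A := by rw [comul_counit]
      _ = m := by monoidal
  rw [h1, h2]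

private lemma aux_revcounital (A : C) (m : A ⊗ A ⟶ A) (d : A ⟶ A ⊗ A) (e : A ⟶ 𝟙_ C)
    (counit_comul : d ≫ (e ▷ A) = (λ_ A).inv)
    (mul_counit : m ≫ e = (e ⊗ₘ e) ≫ (λ_ (𝟙_ C)).hom) :
    RevCounital A ((A ◁ d) ≫ (α_ A A A).inv ≫ (m ▷ A)) e := by
  unfold RevCounital
  have h1 : (d.mop ≫ (mop A ◁ e.mop)) = (ρ_ (mop A)).inv := by
    apply Quiver.Hom.unmop_inj; simpa using counit_comul
  have h2 : m.mop ≫ e.mop = (e.mop ⊗ₘ e.mop) ≫ (λ_ (𝟙_ Cᴹᵒᵖ)).hom := by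
    apply Quiver.Hom.unmop_inj
    simpa [unitors_equal] using mul_counit
  have h := congrArg Quiver.Hom.unmop (aux_counital (mop A) m.mop d.mop e.mop h1 h2)
  simpa [Counital] using h

private lemma aux_revfusion (A : C) (m : A ⊗ A ⟶ A) (d : A ⟶ A ⊗ A)
    (mul_assoc : (m ▷ A) ≫ m = (α_ A A A).hom ≫ (A ◁ m) ≫ m)
    (comul_assoc : d ≫ (A ◁ d) = d ≫ (d ▷ A) ≫ (α_ A A A).hom)
    (mul_comul : m ≫ d =
      (d ⊗ₘ d) ≫ (α_ A A (A ⊗ A)).hom ≫ (A ◁ (α_ A A A).inv) ≫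
        (A ◁ ((β_ A A).hom ▷ A)) ≫ (A ◁ (α_ A A A).hom) ≫
        (α_ A A (A ⊗ A)).inv ≫ (m ⊗ₘ m)) :
    RevFusionEq A ((A ◁ d) ≫ (α_ A A A).inv ≫ (m ▷ A)) := by
  unfold RevFusionEq
  have h1 : (m.mop ▷ mop A) ≫ m.mop =
      (α_ (mop A) (mop A) (mop A)).hom ≫ (mop A ◁ m.mop) ≫ m.mop := by
    apply Quiver.Hom.unmop_inj
    simp only [unmop_comp, unmop_whiskerRight, unmop_whiskerLeft, Quiver.Hom.unmop_mop,
      unmop_hom_associator, Iso.symm_hom]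
    rw [mul_assoc]; simp
  have h2 : d.mop ≫ (mop A ◁ d.mop) =
      d.mop ≫ (d.mop ▷ mop A) ≫ (α_ (mop A) (mop A) (mop A)).hom := by
    apply Quiver.Hom.unmop_inj
    simp only [unmop_comp, unmop_whiskerRight, unmop_whiskerLeft, Quiver.Hom.unmop_mop,
      unmop_hom_associator, Iso.symm_hom]
    rw [← assoc, comul_assoc]; simp
  have h3 : m.mop ≫ d.mop =
      (d.mop ⊗ₘ d.mop) ≫ (α_ (mop A) (mop A) (mop A ⊗ mop A)).hom ≫
        (mop A ◁ (α_ (mop A) (mop A) (mop A)).inv) ≫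
        (mop A ◁ ((β_ (mop A) (mop A)).hom ▷ mop A)) ≫
        (mop A ◁ (α_ (mop A) (mop A) (mop A)).hom) ≫
        (α_ (mop A) (mop A) (mop A ⊗ mop A)).inv ≫ (m.mop ⊗ₘ m.mop) := by
    apply Quiver.Hom.unmop_inj
    simp only [unmop_comp, unmop_whiskerRight, unmop_whiskerLeft, Quiver.Hom.unmop_mop,
      unmop_hom_associator, unmop_inv_associator, unmop_tensorHom, unmop_hom_braiding,
      Iso.symm_hom, Iso.symm_inv]
    rw [mul_comul, tensorHom_def d d, tensorHom_def m m]
    monoidal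
  have h := congrArg Quiver.Hom.unmop
    (aux_fusion (mop A) m.mop d.mop h1 h2 h3)
  simpa [FusionEq] using h

end Aux

/-- For a bimonoid `A`, the morphisms `t₁ := (d ⊗ 1) ≫ (1 ⊗ m)` and
`t₂ := (1 ⊗ d) ≫ (m ⊗ 1)` together with the counit `e` form a multiplier bimonoid. -/
theorem bimonoid_multiplierBimonoid (A : C)
    (m : A ⊗ A ⟶ A) (u : 𝟙_ C ⟶ A) (d : A ⟶ A ⊗ A) (e : A ⟶ 𝟙_ C)
    -- monoid axioms
    (mul_assoc : (m ▷ A) ≫ m = (α_ A A A).hom ≫ (A ◁ m) ≫ m)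
    (one_mul : (u ▷ A) ≫ m = (λ_ A).hom)
    (mul_one : (A ◁ u) ≫ m = (ρ_ A).hom)
    -- comonoid axioms
    (comul_assoc : d ≫ (A ◁ d) = d ≫ (d ▷ A) ≫ (α_ A A A).hom)
    (counit_comul : d ≫ (e ▷ A) = (λ_ A).inv)
    (comul_counit : d ≫ (A ◁ e) = (ρ_ A).inv)
    -- `d` and `e` are monoid morphisms (bimonoid compatibility)
    (mul_comul : m ≫ d =
      (d ⊗ₘ d) ≫ (α_ A A (A ⊗ A)).hom ≫ (A ◁ (α_ A A A).inv) ≫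
        (A ◁ ((β_ A A).hom ▷ A)) ≫ (A ◁ (α_ A A A).hom) ≫
        (α_ A A (A ⊗ A)).inv ≫ (m ⊗ₘ m))
    (mul_counit : m ≫ e = (e ⊗ₘ e) ≫ (λ_ (𝟙_ C)).hom)
    (one_comul : u ≫ d = (λ_ (𝟙_ C)).inv ≫ (u ⊗ₘ u))
    (one_counit : u ≫ e = 𝟙 (𝟙_ C)) :
    FusionEq A ((d ▷ A) ≫ (α_ A A A).hom ≫ (A ◁ m)) ∧
    Counital A ((d ▷ A) ≫ (α_ A A A).hom ≫ (A ◁ m)) e ∧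
    RevFusionEq A ((A ◁ d) ≫ (α_ A A A).inv ≫ (m ▷ A)) ∧
    RevCounital A ((A ◁ d) ≫ (α_ A A A).inv ≫ (m ▷ A)) e ∧
    CompatEq A ((d ▷ A) ≫ (α_ A A A).hom ≫ (A ◁ m))
      ((A ◁ d) ≫ (α_ A A A).inv ≫ (m ▷ A)) ∧
    ((d ▷ A) ≫ (α_ A A A).hom ≫ (A ◁ m)) ≫ (e ▷ A) ≫ (λ_ A).hom =
      ((A ◁ d) ≫ (α_ A A A).inv ≫ (m ▷ A)) ≫ (A ◁ e) ≫ (ρ_ A).hom :=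
  ⟨aux_fusion A m d mul_assoc comul_assoc mul_comul,
   aux_counital A m d e comul_counit mul_counit,
   aux_revfusion A m d mul_assoc comul_assoc mul_comul,
   aux_revcounital A m d e counit_comul mul_counit,
   aux_compat A m d comul_assoc,
   aux_last A m d e counit_comul comul_counit⟩
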